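/- Let N ≥ 1, let C ⊆ ℂ^N be a compact set, let (R_n) be a sequence of positive real numbers with R_n → ∞, and for each n let g_n : Δ_{R_n} → ℂ^N be a holomorphic map with image contained in C and satisfying ‖g_n′(z)‖ ≤ R_n² / (R_n² − |z|²) for all z ∈ Δ_{R_n}. Then there exist a strictly increasing sequence of indices (n_k) and a holomorphic map g : ℂ → ℂ^N with image contained in C such that g_{n_k} converges to g locally uniformly on ℂ and g_{n_k}′(0) → g′(0). In particular, if ‖g_n′(0)‖ = 1 for every n, then ‖g′(0)‖ = 1. -/

import Mathlib

/-!
STATEMENT 6: Let `N ≥ 1`, let `C ⊆ ℂ^N` be compact, let `(R n)` be positive reals with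
`R n → ∞`, and for each `n` let `g n : Δ_{R n} → ℂ^N` be holomorphic with image in `C` and
`‖(g n)′(z)‖ ≤ (R n)² / ((R n)² − |z|²)` on `Δ_{R n}`.  Then there are a strictly increasing
sequence of indices `φ` and a holomorphic `G : ℂ → ℂ^N` with image in `C` such that
`g ∘ φ → G` locally uniformly on `ℂ` and `(g (φ k))′(0) → G′(0)`.  In particular, if
`‖(g n)′(0)‖ = 1` for all `n`, then `‖G′(0)‖ = 1`.
-/

open Filter Metric



lemma brody_aux_lip {E : Type*} [NormedAddCommGroup E] [NormedSpace ℂ E]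
    {f : ℂ → E} {Rn : ℝ} {m : ℕ}
    (hd : DifferentiableOn ℂ f (ball (0 : ℂ) Rn))
    (hb : ∀ z ∈ ball (0 : ℂ) Rn, ‖deriv f z‖ ≤ Rn ^ 2 / (Rn ^ 2 - ‖z‖ ^ 2))
    (hR : 2 * ((m : ℝ) + 2) ≤ Rn) :
    LipschitzOnWith 2 f (closedBall (0 : ℂ) (m + 1)) := by
  have hsub : closedBall (0 : ℂ) (m + 1) ⊆ ball (0 : ℂ) Rn :=
    closedBall_subset_ball (by nlinarith [Nat.cast_nonneg (α := ℝ) m])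
  refine (convex_closedBall _ _).lipschitzOnWith_of_nnnorm_deriv_le
    (fun x hx => hd.differentiableAt (isOpen_ball.mem_nhds (hsub hx))) ?_
  intro x hx
  have h1 : ‖x‖ ≤ (m : ℝ) + 1 := by
    simpa [dist_zero_right] using mem_closedBall.mp hx
  have h0 : (0 : ℝ) ≤ ‖x‖ := norm_nonneg _
  have h2 := hb x (hsub hx)
  have h3 : Rn ^ 2 / (Rn ^ 2 - ‖x‖ ^ 2) ≤ 2 := by
    rw [div_le_iff₀ (by nlinarith)]
    nlinarith
  have h4 : ‖deriv f x‖ ≤ 2 := h2.trans h3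
  exact_mod_cast (by simpa [← NNReal.coe_le_coe] using h4 : ‖deriv f x‖₊ ≤ (2 : NNReal))

lemma brody_aux_S {X E : Type*} [MetricSpace X] [MetricSpace E] {C : Set E} (hC : IsCompact C) :
    IsCompact {f : C(X, E) | LipschitzWith 2 ⇑f ∧ ∀ x, f x ∈ C} := by
  set S : Set C(X, E) := {f : C(X, E) | LipschitzWith 2 ⇑f ∧ ∀ x, f x ∈ C} with hS
  set T : Set (X → E) :=
    {f : X → E | (∀ x y, dist (f x) (f y) ≤ 2 * dist x y) ∧ ∀ x, f x ∈ C} with hT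
  apply ArzelaAscoli.isCompact_of_equicontinuous
  · have himage : ContinuousMap.toFun '' S = T := by
      ext f
      constructor
      · rintro ⟨F, ⟨hF1, hF2⟩, rfl⟩
        exact ⟨fun x y => by simpa using hF1.dist_le_mul x y, hF2⟩
      · rintro ⟨h1, h2⟩
        have hlip : LipschitzWith 2 f := by
          rw [lipschitzWith_iff_dist_le_mul]
          intro x y; simpa using h1 x y
        exact ⟨⟨f, hlip.continuous⟩, ⟨hlip, h2⟩, rfl⟩
    rw [himage]
    have hTsub : T ⊆ Set.pi Set.univ fun _ : X => C := fun f hf x _ => hf.2 x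
    have hTclosed : IsClosed T := by
      have h1 : IsClosed {f : X → E | ∀ x y, dist (f x) (f y) ≤ 2 * dist x y} := by
        simp only [Set.setOf_forall]
        refine isClosed_iInter fun x => isClosed_iInter fun y => ?_
        exact isClosed_le ((continuous_apply x).dist (continuous_apply y)) continuous_const
      have h2 : IsClosed {f : X → E | ∀ x, f x ∈ C} := by
        simp only [Set.setOf_forall]
        exact isClosed_iInter fun x => hC.isClosed.preimage (continuous_apply x)
      exact h1.inter h2
    exact (isCompact_univ_pi fun _ => hC).of_isClosed_subset hTclosed hTsub
  · refine equicontinuous_of_continuity_modulus (fun r => 2 * r) ?_ _ ?_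
    · have : Filter.Tendsto (fun r : ℝ => 2 * r) (nhds 0) (nhds (2 * 0)) :=
        (continuous_const.mul continuous_id).tendsto 0
      simpa using this
    · rintro x y ⟨f, hf⟩
      simpa using hf.1.dist_le_mul x y

theorem brody_limit_of_bounded_derivative_sequence
    (N : ℕ) (hN : 1 ≤ N)
    (C : Set (EuclideanSpace ℂ (Fin N))) (hC : IsCompact C)
    (R : ℕ → ℝ) (hRpos : ∀ n, 0 < R n) (hRtop : Tendsto R atTop atTop)
    (g : ℕ → ℂ → EuclideanSpace ℂ (Fin N))
    (hdiff : ∀ n, DifferentiableOn ℂ (g n) (ball (0 : ℂ) (R n)))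
    (himg : ∀ n, Set.MapsTo (g n) (ball (0 : ℂ) (R n)) C)
    (hbound : ∀ n, ∀ z ∈ ball (0 : ℂ) (R n),
      ‖deriv (g n) z‖ ≤ (R n) ^ 2 / ((R n) ^ 2 - ‖z‖ ^ 2)) :
    ∃ φ : ℕ → ℕ, StrictMono φ ∧
      ∃ G : ℂ → EuclideanSpace ℂ (Fin N), Differentiable ℂ G ∧
        Set.range G ⊆ C ∧
        TendstoLocallyUniformly (fun k => g (φ k)) G atTop ∧
        Tendsto (fun k => deriv (g (φ k)) 0) atTop (nhds (deriv G 0)) ∧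
        ((∀ n, ‖deriv (g n) 0‖ = 1) → ‖deriv G 0‖ = 1) := by
  classical
  obtain ⟨c₀, hc₀⟩ : C.Nonempty := ⟨g 0 0, himg 0 (mem_ball_self (hRpos 0))⟩
  obtain ⟨ψ, hψmono, hψ⟩ :=
    Filter.extraction_forall_of_eventually (P := fun (n k : ℕ) => 2 * ((n : ℝ) + 2) ≤ R k)
      fun n => hRtop.eventually_ge_atTop _
  have hball : ∀ {m : ℕ} {r : ℝ}, 2 * ((m : ℝ) + 2) ≤ r →
      closedBall (0 : ℂ) ((m : ℝ) + 1) ⊆ ball (0 : ℂ) r := fun {m r} h =>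
    closedBall_subset_ball (by nlinarith [Nat.cast_nonneg (α := ℝ) m])
  set K : ℕ → Set ℂ := fun m => closedBall (0 : ℂ) ((m : ℝ) + 1) with hK
  haveI hKcs : ∀ m : ℕ, CompactSpace (K m) := fun m =>
    isCompact_iff_compactSpace.mp (isCompact_closedBall _ _)
  set S : (m : ℕ) → Set C(K m, EuclideanSpace ℂ (Fin N)) := fun m =>
    {f | LipschitzWith 2 ⇑f ∧ ∀ x, f x ∈ C} with hSdef
  haveI hScs : ∀ m : ℕ, CompactSpace (S m) := fun m =>
    isCompact_iff_compactSpace.mp (brody_aux_S hC)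
  -- restriction continuous maps
  have hcont : ∀ (n m : ℕ), 2 * ((m : ℝ) + 2) ≤ R n → Continuous ((K m).restrict (g n)) :=
    fun n m h => continuousOn_iff_continuous_restrict.mp ((hdiff n).continuousOn.mono (hball h))
  have hmem : ∀ (n m : ℕ) (h : 2 * ((m : ℝ) + 2) ≤ R n),
      (⟨(K m).restrict (g n), hcont n m h⟩ : C(K m, EuclideanSpace ℂ (Fin N))) ∈ S m := by
    intro n m h
    refine ⟨?_, fun x => himg n (hball h x.2)⟩
    exact lipschitzOnWith_iff_restrict.mp (brody_aux_lip (hdiff n) (hbound n) h)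
  have hconstmem : ∀ m : ℕ,
      (ContinuousMap.const (K m) c₀ : C(K m, EuclideanSpace ℂ (Fin N))) ∈ S m := by
    intro m
    refine ⟨?_, fun x => hc₀⟩
    exact (LipschitzWith.const (b := c₀) (α := K m)).weaken (by norm_num)
  set F : ℕ → ∀ m, S m := fun n m =>
    if h : 2 * ((m : ℝ) + 2) ≤ R (ψ n)
    then ⟨⟨(K m).restrict (g (ψ n)), hcont (ψ n) m h⟩, hmem (ψ n) m h⟩
    else ⟨ContinuousMap.const (K m) c₀, hconstmem m⟩ with hF
  obtain ⟨L, φ', hφ'mono, hLconv⟩ := SeqCompactSpace.tendsto_subseq F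
  have hcond : ∀ m k : ℕ, m ≤ k → 2 * ((m : ℝ) + 2) ≤ R (ψ (φ' k)) := by
    intro m k hmk
    have h1 : (m : ℝ) ≤ (φ' k : ℝ) := by
      exact_mod_cast hmk.trans hφ'mono.le_apply
    linarith [hψ (φ' k)]
  have hLm : ∀ m : ℕ, Tendsto (fun k => ((F (φ' k) m : C(K m, EuclideanSpace ℂ (Fin N)))))
      atTop (nhds (L m : C(K m, EuclideanSpace ℂ (Fin N)))) := by
    intro m
    have hc : Continuous (fun p : (∀ j, S j) =>
        ((p m : C(K m, EuclideanSpace ℂ (Fin N))))) := (continuous_apply m).subtype_val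
    exact (hc.tendsto L).comp hLconv
  have hUm : ∀ m : ℕ, TendstoUniformly
      (fun k (x : K m) => (F (φ' k) m : C(K m, EuclideanSpace ℂ (Fin N))) x)
      (fun x => (L m : C(K m, EuclideanSpace ℂ (Fin N))) x) atTop := fun m =>
    ContinuousMap.tendsto_iff_tendstoUniformly.mp (hLm m)
  have hFeq : ∀ (m k : ℕ), m ≤ k → ∀ x : K m,
      (F (φ' k) m : C(K m, EuclideanSpace ℂ (Fin N))) x = g (ψ (φ' k)) x := by
    intro m k hmk x
    simp only [hF, dif_pos (hcond m k hmk)]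
    rfl
  have hpt : ∀ (m : ℕ) (z : ℂ) (hz : z ∈ K m),
      Tendsto (fun k => g (ψ (φ' k)) z) atTop
        (nhds ((L m : C(K m, EuclideanSpace ℂ (Fin N))) ⟨z, hz⟩)) := by
    intro m z hz
    refine ((hUm m).tendsto_at ⟨z, hz⟩).congr' ?_
    filter_upwards [eventually_ge_atTop m] with k hk
    exact hFeq m k hk ⟨z, hz⟩
  have hzK : ∀ z : ℂ, z ∈ K (⌈‖z‖⌉₊) := by
    intro z
    rw [hK, mem_closedBall, Complex.dist_eq, sub_zero]
    exact (Nat.le_ceil _).trans (by linarith)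
  set G : ℂ → EuclideanSpace ℂ (Fin N) := fun z =>
    (L ⌈‖z‖⌉₊ : C(K ⌈‖z‖⌉₊, EuclideanSpace ℂ (Fin N))) ⟨z, hzK z⟩ with hG
  have hGeq : ∀ (m : ℕ) (z : ℂ) (hz : z ∈ K m),
      G z = (L m : C(K m, EuclideanSpace ℂ (Fin N))) ⟨z, hz⟩ := fun m z hz =>
    tendsto_nhds_unique (hpt _ z (hzK z)) (hpt m z hz)
  have hGU : ∀ m : ℕ, TendstoUniformlyOn (fun k => g (ψ (φ' k))) G atTop (K m) := by
    intro m
    rw [tendstoUniformlyOn_iff_tendstoUniformly_comp_coe]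
    have h1 : (fun x : K m => G x) =
        fun x : K m => (L m : C(K m, EuclideanSpace ℂ (Fin N))) x := by
      funext x
      exact hGeq m x x.2
    have h2 : TendstoUniformly
        (fun k (x : K m) => g (ψ (φ' k)) x)
        (fun x : K m => (L m : C(K m, EuclideanSpace ℂ (Fin N))) x) atTop := by
      have hUm' := hUm m
      rw [← tendstoUniformlyOn_univ] at hUm' ⊢
      refine hUm'.congr ?_
      filter_upwards [eventually_ge_atTop m] with k hk
      intro x _
      exact hFeq m k hk x
    show TendstoUniformly (fun k (x : K m) => g (ψ (φ' k)) x) (fun x : K m => G x) atTop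
    rw [h1]
    exact h2
  have hTLU : TendstoLocallyUniformly (fun k => g (ψ (φ' k))) G atTop := by
    rw [tendstoLocallyUniformly_iff_forall_isCompact]
    intro Kc hKc
    obtain ⟨r, hr⟩ := hKc.isBounded.subset_closedBall 0
    refine (hGU ⌈r⌉₊).mono (hr.trans (closedBall_subset_closedBall ?_))
    exact (Nat.le_ceil _).trans (by linarith)
  have hev : ∀ m : ℕ, ∀ᶠ k in atTop,
      DifferentiableOn ℂ (g (ψ (φ' k))) (ball (0 : ℂ) ((m : ℝ) + 1)) := by
    intro m
    filter_upwards [eventually_ge_atTop m] with k hk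
    refine (hdiff _).mono (ball_subset_ball ?_)
    have := hcond m k hk
    have hm0 : (0 : ℝ) ≤ (m : ℝ) := Nat.cast_nonneg m
    linarith
  have hGdiff : Differentiable ℂ G := by
    intro z
    have h1 := (hTLU.tendstoLocallyUniformlyOn (s := ball (0 : ℂ) ((⌈‖z‖⌉₊ : ℝ) + 1)))
    have h2 := h1.differentiableOn (hev _) isOpen_ball
    have hz : z ∈ ball (0 : ℂ) ((⌈‖z‖⌉₊ : ℝ) + 1) := by
      rw [mem_ball, Complex.dist_eq, sub_zero]
      exact lt_of_le_of_lt (Nat.le_ceil _) (by linarith)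
    exact h2.differentiableAt (isOpen_ball.mem_nhds hz)
  have hder : Tendsto (fun k => deriv (g (ψ (φ' k))) 0) atTop (nhds (deriv G 0)) := by
    have h1 := (hTLU.tendstoLocallyUniformlyOn (s := ball (0 : ℂ) (((0 : ℕ) : ℝ) + 1)))
    have h2 := h1.deriv (hev 0) isOpen_ball
    have h3 := h2.tendsto_at (mem_ball_self (by norm_num) : (0 : ℂ) ∈ ball (0 : ℂ) (((0 : ℕ) : ℝ) + 1))
    simpa [Function.comp] using h3
  refine ⟨fun k => ψ (φ' k), fun a b h => hψmono (hφ'mono h), G, hGdiff, ?_, hTLU, hder, ?_⟩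
  · rintro _ ⟨z, rfl⟩
    refine hC.isClosed.mem_of_tendsto (hpt ⌈‖z‖⌉₊ z (hzK z)) ?_
    filter_upwards [eventually_ge_atTop ⌈‖z‖⌉₊] with k hk
    · exact himg _ (hball (hcond _ k hk) (hzK z))
  · intro h1
    have h2 := (continuous_norm.tendsto _).comp hder
    have h3 : Tendsto (fun k => ‖deriv (g (ψ (φ' k))) 0‖) atTop (nhds 1) := by
      simpa [h1] using tendsto_const_nhds (α := ℝ) (f := atTop (α := ℕ)) (a := 1)
    exact tendsto_nhds_unique h2 h3
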